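/- Let a̲ ∈ [0,1) and A = [a̲,1]. Let u : A → ℝ be twice continuously differentiable with u' > 0 and u'' < 0 on A, and set M = max over a ∈ A of |u''(a)|. Let c₀ = 1 − e^{−rΔ} with r, Δ > 0, let C ≥ 0, I_k ≥ 0, I_u ≥ 0 be constants, and let a_I ∈ A. Define g(x) = c₀·u(x) − C·(a_I·I_k + x·I_u)·x for x ∈ A, and for a fixed a* ∈ A define f(x) = c₀·u(x) − C·(a_I·I_k + a*·I_u)·x. Assume a* maximizes f over A, let a† be the unique maximizer of the strictly concave function g over A, and assume both are interior: a̲ < a† and a* < 1. Then c₀·M·(a* − a†) ≥ C·(2a† − a*)·I_u. -/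

import Mathlib

lemma foc_right_aux (a0 : ℝ) (ha01 : a0 ≤ 1)
    (F : ℝ → ℝ) (F' : ℝ) (astar : ℝ) (hastar : astar ∈ Set.Icc a0 1)
    (hd : HasDerivWithinAt F F' (Set.Icc a0 1) astar)
    (hmax : ∀ x ∈ Set.Icc a0 1, F x ≤ F astar) (h2 : astar < 1) :
    F' ≤ 0 := by
  have hloc : IsLocalMaxOn F (Set.Icc a0 1) astar :=
    (isMaxOn_iff.mpr hmax).filter_mono inf_le_right
  have hy : (1 - astar) ∈ posTangentConeAt (Set.Icc a0 1) astar := by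
    apply mem_posTangentConeAt_of_segment_subset
    have h : astar + (1 - astar) = 1 := by ring
    rw [h]
    exact (convex_Icc a0 1).segment_subset hastar (Set.right_mem_Icc.mpr ha01)
  have := hloc.hasFDerivWithinAt_nonpos hd hy
  simp only [ContinuousLinearMap.smulRight_apply, ContinuousLinearMap.one_apply,
    smul_eq_mul, ContinuousLinearMap.toSpanSingleton_apply] at this
  nlinarith

lemma foc_left_aux (a0 : ℝ) (ha01 : a0 ≤ 1)
    (F : ℝ → ℝ) (F' : ℝ) (a : ℝ) (ha : a ∈ Set.Icc a0 1)
    (hd : HasDerivWithinAt F F' (Set.Icc a0 1) a)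
    (hmax : ∀ x ∈ Set.Icc a0 1, F x ≤ F a) (h2 : a0 < a) :
    0 ≤ F' := by
  have hloc : IsLocalMaxOn F (Set.Icc a0 1) a :=
    (isMaxOn_iff.mpr hmax).filter_mono inf_le_right
  have hy : (a0 - a) ∈ posTangentConeAt (Set.Icc a0 1) a := by
    apply mem_posTangentConeAt_of_segment_subset
    have h : a + (a0 - a) = a0 := by ring
    rw [h]
    exact (convex_Icc a0 1).segment_subset ha (Set.left_mem_Icc.mpr ha01)
  have := hloc.hasFDerivWithinAt_nonpos hd hy
  simp only [ContinuousLinearMap.smulRight_apply, ContinuousLinearMap.one_apply,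
    smul_eq_mul, ContinuousLinearMap.toSpanSingleton_apply] at this
  nlinarith

/-- Lower bound on the gap between equilibrium and static efficient actions when
both are interior: `c₀ M (a* - a†) ≥ C (2a† - a*) I_u`, where
`M = max_{a ∈ A} |u''(a)|`. -/
theorem stmt_13 (a0 : ℝ) (ha0 : a0 ∈ Set.Ico (0:ℝ) 1)
    (u u' u'' : ℝ → ℝ)
    (hderiv : ∀ x ∈ Set.Icc a0 1, HasDerivWithinAt u (u' x) (Set.Icc a0 1) x)
    (hderiv2 : ∀ x ∈ Set.Icc a0 1, HasDerivWithinAt u' (u'' x) (Set.Icc a0 1) x)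
    (hu''cont : ContinuousOn u'' (Set.Icc a0 1))
    (hu'pos : ∀ x ∈ Set.Icc a0 1, 0 < u' x)
    (hu''neg : ∀ x ∈ Set.Icc a0 1, u'' x < 0)
    (M : ℝ) (hM : IsGreatest ((fun a => |u'' a|) '' Set.Icc a0 1) M)
    (r Δ C Ik Iu aI : ℝ) (hr : 0 < r) (hΔ : 0 < Δ) (hC : 0 ≤ C)
    (hIk : 0 ≤ Ik) (hIu : 0 ≤ Iu) (haI : aI ∈ Set.Icc a0 1)
    (astar adag : ℝ) (hastar : astar ∈ Set.Icc a0 1) (hadag : adag ∈ Set.Icc a0 1)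
    -- `a*` maximizes `f(x) = c₀ u(x) - C(a_I I_k + a* I_u)x` over `A`
    (hf : ∀ x ∈ Set.Icc a0 1,
      (1 - Real.exp (-(r*Δ))) * u x - C * (aI*Ik + astar*Iu) * x ≤
      (1 - Real.exp (-(r*Δ))) * u astar - C * (aI*Ik + astar*Iu) * astar)
    -- `a†` maximizes `g(x) = c₀ u(x) - C(a_I I_k + x I_u)x` over `A`
    (hg : ∀ x ∈ Set.Icc a0 1,
      (1 - Real.exp (-(r*Δ))) * u x - C * (aI*Ik + x*Iu) * x ≤
      (1 - Real.exp (-(r*Δ))) * u adag - C * (aI*Ik + adag*Iu) * adag)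
    -- and `a†` is the unique such maximizer
    (hg_unique : ∀ x ∈ Set.Icc a0 1,
      (∀ y ∈ Set.Icc a0 1,
        (1 - Real.exp (-(r*Δ))) * u y - C * (aI*Ik + y*Iu) * y ≤
        (1 - Real.exp (-(r*Δ))) * u x - C * (aI*Ik + x*Iu) * x) → x = adag)
    -- interiority
    (h_int1 : a0 < adag) (h_int2 : astar < 1) :
    C * (2*adag - astar) * Iu ≤ (1 - Real.exp (-(r*Δ))) * M * (astar - adag) := by
  set c₀ : ℝ := 1 - Real.exp (-(r*Δ)) with hc₀def
  have ha01 : a0 ≤ 1 := le_of_lt ha0.2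
  have hc₀ : 0 < c₀ := by
    have : Real.exp (-(r*Δ)) < 1 := by
      rw [Real.exp_lt_one_iff]
      nlinarith
    linarith
  -- adag ≤ astar
  have hle : adag ≤ astar := by
    by_contra hcon
    push_neg at hcon
    have h1 := hg astar hastar
    have h2 := hf adag hadag
    have hadagpos : 0 < adag := lt_of_le_of_lt ha0.1 h_int1
    have hCIu : C * Iu = 0 := by
      rcases ((mul_nonneg hC hIu).eq_or_lt.imp_left Eq.symm) with h | h
      · exact h
      · exfalso
        nlinarith [mul_pos (mul_pos h hadagpos) (sub_pos.mpr hcon), h1, h2]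
    have : astar = adag := by
      apply hg_unique astar hastar
      intro y hy
      have hfy := hf y hy
      have e1 : C * Iu * y * y = 0 := by rw [hCIu]; ring
      have e2 : C * Iu * astar * y = 0 := by rw [hCIu]; ring
      have e3 : C * Iu * astar * astar = 0 := by rw [hCIu]; ring
      nlinarith [hfy, e1, e2, e3]
    linarith
  -- FOC for f at astar
  have hF' : c₀ * u' astar - C * (aI*Ik + astar*Iu) ≤ 0 := by
    refine foc_right_aux a0 ha01 _ _ astar hastar ?_ hf h_int2
    have h1 := (hderiv astar hastar).const_mul c₀
    have h2 : HasDerivWithinAt (fun x : ℝ => C * (aI*Ik + astar*Iu) * x)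
        (C * (aI*Ik + astar*Iu)) (Set.Icc a0 1) astar := by
      simpa using (hasDerivWithinAt_id astar (Set.Icc a0 1)).const_mul (C * (aI*Ik + astar*Iu))
    exact h1.sub h2
  -- FOC for g at adag
  have hG' : 0 ≤ c₀ * u' adag - (C * (aI*Ik) + C*Iu*(2*adag)) := by
    refine foc_left_aux a0 ha01 _ _ adag hadag ?_ hg h_int1
    have h1 := (hderiv adag hadag).const_mul c₀
    have ha := (hasDerivWithinAt_id adag (Set.Icc a0 1)).const_mul (C*(aI*Ik))
    have hb := (hasDerivWithinAt_pow 2 adag (s := Set.Icc a0 1)).const_mul (C*Iu)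
    have base : HasDerivWithinAt (fun x : ℝ => C*(aI*Ik)*x + C*Iu*x^2)
        (C * (aI*Ik) + C*Iu*(2*adag)) (Set.Icc a0 1) adag := by
      have := ha.add hb
      simp only [pow_one, id] at this
      exact this.congr_deriv (by norm_num)
    have h2 : HasDerivWithinAt (fun x : ℝ => C * (aI*Ik + x*Iu) * x)
        (C * (aI*Ik) + C*Iu*(2*adag)) (Set.Icc a0 1) adag :=
      base.congr (fun y _ => by ring) (by ring)
    exact h1.sub h2
  -- |u''| ≤ M on the interval
  have hMx : ∀ x ∈ Set.Icc a0 1, -M ≤ u'' x := by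
    intro x hx
    have := hM.2 ⟨x, hx, rfl⟩
    have := abs_le.mp this
    linarith [this.1]
  -- u' + M * id is monotone on Icc
  have hmono : MonotoneOn (fun x => u' x + M * x) (Set.Icc a0 1) := by
    apply monotoneOn_of_hasDerivWithinAt_nonneg (convex_Icc a0 1)
      (f' := fun x => u'' x + M)
    · intro x hx
      exact ((hderiv2 x hx).continuousWithinAt).add
        ((continuous_const.mul continuous_id).continuousAt.continuousWithinAt)
    · intro x hx
      have hx' : x ∈ Set.Icc a0 1 := interior_subset hx
      have h1 := (hderiv2 x hx').mono (interior_subset : interior (Set.Icc a0 1) ⊆ _)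
      have h2 : HasDerivWithinAt (fun y : ℝ => M * y) M (interior (Set.Icc a0 1)) x := by
        simpa using (hasDerivWithinAt_id x _).const_mul M
      exact h1.add h2
    · intro x hx
      have := hMx x (interior_subset hx)
      linarith
  have hkey : u' adag + M * adag ≤ u' astar + M * astar := hmono hadag hastar hle
  -- combine
  nlinarith [mul_le_mul_of_nonneg_left (sub_nonneg.mpr hkey) hc₀.le]
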